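/- arXiv:2201.07637 — 6 statements merged into one kernel-verified Lean document; each statement's English description precedes it below -/
import Mathlib

section
/- For every positive integer n and every integer N ≥ 2n, if an ordered graph G on [N] does not contain the nested matching NM_n as an ordered subgraph, then G has at most (n − 1)(2N − 2n + 1) edges. -/
/-- `G` (an ordered graph on `[m]`, modeled on `Fin m`) is an ordered subgraph of `H`
(on `Fin N`): there is a strictly increasing map preserving edges. -/
def OrderedSubgraph {m N : ℕ} (G : SimpleGraph (Fin m)) (H : SimpleGraph (Fin N)) : Prop :=
  ∃ φ : Fin m → Fin N, StrictMono φ ∧ ∀ i j : Fin m, G.Adj i j → H.Adj (φ i) (φ j)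

/-- The ordered Ramsey number `r_<(G, H)`: the least `N` such that every red-blue coloring
of the edges of the complete ordered graph on `N` vertices (given by its red graph `R`)
contains a red ordered copy of `G` or a blue ordered copy of `H`. -/
noncomputable def orderedRamsey {m k : ℕ} (G : SimpleGraph (Fin m)) (H : SimpleGraph (Fin k)) : ℕ :=
  sInf {N : ℕ | ∀ R : SimpleGraph (Fin N), OrderedSubgraph G R ∨ OrderedSubgraph H Rᶜ}

/-- The nested matching `NM_n`: the ordered graph on `2n` vertices with edges
`{i, 2n - i + 1}` (1-indexed), i.e. `i + j = 2n - 1` in 0-indexed form. -/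
def nestedMatching (n : ℕ) : SimpleGraph (Fin (2 * n)) :=
  SimpleGraph.fromRel (fun i j => (i : ℕ) + (j : ℕ) = 2 * n - 1)

/-- The ordered star `S_{l,r}` on `l + r - 1` vertices: the `l`-th vertex (1-indexed)
is adjacent to all other vertices. -/
def orderedStar (l r : ℕ) : SimpleGraph (Fin (l + r - 1)) :=
  SimpleGraph.fromRel (fun i _ => (i : ℕ) = l - 1)

/-- The join `G + H` of ordered graphs, identifying the rightmost vertex of `G`
with the leftmost vertex of `H`. -/
def orderedJoin {m k : ℕ} (G : SimpleGraph (Fin m)) (H : SimpleGraph (Fin k)) :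
    SimpleGraph (Fin (m + k - 1)) :=
  SimpleGraph.fromRel (fun i j =>
    (∃ a b : Fin m, G.Adj a b ∧ (i : ℕ) = (a : ℕ) ∧ (j : ℕ) = (b : ℕ)) ∨
    (∃ a b : Fin k, H.Adj a b ∧ (i : ℕ) = (a : ℕ) + (m - 1) ∧ (j : ℕ) = (b : ℕ) + (m - 1)))

/-- A connected ordered graph on `m` vertices is `n`-good if
`r_<(G, K_n) = (m-1)(n-1) + 1`. -/
def IsNGood {m : ℕ} (n : ℕ) (G : SimpleGraph (Fin m)) : Prop :=
  G.Connected ∧ orderedRamsey G (⊤ : SimpleGraph (Fin n)) = (m - 1) * (n - 1) + 1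

/-- Monotone caterpillar graphs: joins `S_{l₁,r₁} + ⋯ + S_{l_k,r_k}` of one-sided
ordered stars. -/
inductive IsMonotoneCaterpillar : ∀ {m : ℕ}, SimpleGraph (Fin m) → Prop
  | star {l r : ℕ} (hl : 1 ≤ l) (hr : 1 ≤ r) (h : l = 1 ∨ r = 1) :
      IsMonotoneCaterpillar (orderedStar l r)
  | join {m l r : ℕ} {G : SimpleGraph (Fin m)} (hl : 1 ≤ l) (hr : 1 ≤ r) (h : l = 1 ∨ r = 1)
      (hG : IsMonotoneCaterpillar G) : IsMonotoneCaterpillar (orderedJoin G (orderedStar l r))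

/-- A route in the `N × N` grid: a sequence of positions going only right or down. -/
def IsRoute {N : ℕ} (s : List (Fin N × Fin N)) : Prop :=
  s.Chain' (fun p q =>
    ((q.1 : ℕ) = (p.1 : ℕ) + 1 ∧ q.2 = p.2) ∨ (q.1 = p.1 ∧ (q.2 : ℕ) = (p.2 : ℕ) + 1))

section Helpers
open Classical

noncomputable def depthX {N : ℕ} (G : SimpleGraph (Fin N)) (e : Fin N × Fin N) : ℕ :=
  1 + ((Finset.univ.filter (fun p : Fin N × Fin N =>
      (p.1 : ℕ) < p.2 ∧ G.Adj p.1 p.2 ∧ (e.1 : ℕ) < p.1 ∧ (p.2 : ℕ) < e.2)).attach.sup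
      (fun p => depthX G p.1))
termination_by ((e.2 : ℕ) - (e.1 : ℕ))
decreasing_by
  have hp := p.2
  simp only [Finset.mem_filter] at hp
  omega

def goodX {N : ℕ} (G : SimpleGraph (Fin N)) (e : Fin N × Fin N) : Prop :=
  (e.1 : ℕ) < e.2 ∧ G.Adj e.1 e.2

def insideX {N : ℕ} (p q : Fin N × Fin N) : Prop :=
  (q.1 : ℕ) < p.1 ∧ (p.2 : ℕ) < q.2

lemma depthX_pos {N : ℕ} (G : SimpleGraph (Fin N)) (e : Fin N × Fin N) : 1 ≤ depthX G e := by
  rw [depthX]; omega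

lemma depthX_lt {N : ℕ} (G : SimpleGraph (Fin N)) {p e : Fin N × Fin N}
    (hp : goodX G p) (hin : insideX p e) : depthX G p < depthX G e := by
  conv_rhs => rw [depthX]
  have hmem : p ∈ Finset.univ.filter (fun p : Fin N × Fin N =>
      (p.1 : ℕ) < p.2 ∧ G.Adj p.1 p.2 ∧ (e.1 : ℕ) < p.1 ∧ (p.2 : ℕ) < e.2) := by
    simp only [Finset.mem_filter, Finset.mem_univ, true_and]
    exact ⟨hp.1, hp.2, hin.1, hin.2⟩
  have h2 := Finset.le_sup (f := fun q : {x // x ∈ Finset.univ.filter (fun p : Fin N × Fin N =>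
      (p.1 : ℕ) < p.2 ∧ G.Adj p.1 p.2 ∧ (e.1 : ℕ) < p.1 ∧ (p.2 : ℕ) < e.2)} => depthX G q.1)
      (Finset.mem_attach _ ⟨p, hmem⟩)
  dsimp only at h2
  omega

lemma exists_inner {N : ℕ} (G : SimpleGraph (Fin N)) {e : Fin N × Fin N}
    (h : 2 ≤ depthX G e) :
    ∃ p, goodX G p ∧ insideX p e ∧ depthX G e = 1 + depthX G p := by
  have hrw : depthX G e = 1 + ((Finset.univ.filter (fun p : Fin N × Fin N =>
      (p.1 : ℕ) < p.2 ∧ G.Adj p.1 p.2 ∧ (e.1 : ℕ) < p.1 ∧ (p.2 : ℕ) < e.2)).attach.sup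
      (fun p => depthX G p.1)) := by
    rw [depthX]
  have hsne : (Finset.univ.filter (fun p : Fin N × Fin N =>
      (p.1 : ℕ) < p.2 ∧ G.Adj p.1 p.2 ∧ (e.1 : ℕ) < p.1 ∧ (p.2 : ℕ) < e.2)).Nonempty := by
    by_contra hemp
    rw [Finset.not_nonempty_iff_eq_empty] at hemp
    rw [hemp] at hrw
    simp only [Finset.attach_empty, Finset.sup_empty] at hrw
    rw [Nat.bot_eq_zero] at hrw
    omega
  obtain ⟨b, _, hb⟩ := Finset.exists_mem_eq_sup _ (Finset.attach_nonempty_iff.mpr hsne)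
      (fun p : {x // x ∈ Finset.univ.filter (fun p : Fin N × Fin N =>
      (p.1 : ℕ) < p.2 ∧ G.Adj p.1 p.2 ∧ (e.1 : ℕ) < p.1 ∧ (p.2 : ℕ) < e.2)} => depthX G p.1)
  have hbm := Finset.mem_filter.mp b.2
  simp only [Finset.mem_univ, true_and] at hbm
  exact ⟨b.1, ⟨hbm.1, hbm.2.1⟩, ⟨hbm.2.2.1, hbm.2.2.2⟩, by rw [hrw, hb]⟩


lemma insideX_trans {N : ℕ} {a b c : Fin N × Fin N} (h1 : insideX a b) (h2 : insideX b c) :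
    insideX a c := ⟨lt_trans h2.1 h1.1, lt_trans h1.2 h2.2⟩

/-- span lemma: a good edge of depth k has span at least 2k-1. -/
lemma spanX {N : ℕ} (G : SimpleGraph (Fin N)) :
    ∀ k, ∀ e : Fin N × Fin N, goodX G e → depthX G e = k → (e.1 : ℕ) + 2 * k ≤ (e.2 : ℕ) + 1 := by
  intro k
  induction k using Nat.strong_induction_on with
  | _ k ih =>
    intro e he hd
    rcases Nat.lt_or_ge k 2 with hk | hk
    · have := depthX_pos G e
      have := he.1
      omega
    · obtain ⟨p, hp, hin, heq⟩ := exists_inner G (by omega : 2 ≤ depthX G e)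
      have hlt : depthX G p < k := by omega
      have := ih (depthX G p) hlt p hp rfl
      have h1 := hin.1
      have h2 := hin.2
      omega

/-- chain lemma -/
lemma chainX {N : ℕ} (G : SimpleGraph (Fin N)) :
    ∀ k, ∀ e : Fin N × Fin N, goodX G e → k + 1 ≤ depthX G e →
    ∃ c : ℕ → Fin N × Fin N, c 0 = e ∧ (∀ i ≤ k, goodX G (c i)) ∧
      (∀ i < k, insideX (c (i + 1)) (c i)) := by
  intro k
  induction k with
  | zero =>
    intro e he _
    exact ⟨fun _ => e, rfl, fun i _ => he, fun i h => absurd h (Nat.not_lt_zero i)⟩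
  | succ k ih =>
    intro e he hd
    obtain ⟨p, hp, hin, heq⟩ := exists_inner G (by omega : 2 ≤ depthX G e)
    obtain ⟨c', hc0, hcg, hcn⟩ := ih p hp (by omega)
    refine ⟨fun i => if i = 0 then e else c' (i - 1), rfl, ?_, ?_⟩
    · intro i hi
      by_cases h0 : i = 0
      · simp [h0, he]
      · simp only [h0, if_neg]
        exact hcg (i - 1) (by omega)
    · intro i hi
      by_cases h0 : i = 0
      · subst h0
        simpa [hc0] using hin
      · have h1 : i + 1 ≠ 0 := by omega
        simp only [h0, h1, if_neg]
        have := hcn (i - 1) (by omega)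
        have he1 : i - 1 + 1 = i := by omega
        rwa [he1] at this

lemma nestedX {N : ℕ} {k : ℕ} {c : ℕ → Fin N × Fin N}
    (hcn : ∀ i < k, insideX (c (i + 1)) (c i)) :
    ∀ j i, i < j → j ≤ k → insideX (c j) (c i) := by
  intro j
  induction j with
  | zero => intro i h _; omega
  | succ j ih =>
    intro i hij hjk
    rcases Nat.lt_or_ge i j with h | h
    · exact insideX_trans (hcn j (by omega)) (ih i h (by omega))
    · have : i = j := by omega
      subst this
      exact hcn i (by omega)

lemma depthX_le {n N : ℕ} (hn : 1 ≤ n) (G : SimpleGraph (Fin N))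
    (hG : ¬ OrderedSubgraph (nestedMatching n) G) :
    ∀ e, goodX G e → depthX G e ≤ n - 1 := by
  intro e he
  by_contra hlt
  push_neg at hlt
  obtain ⟨c, hc0, hcg, hcn⟩ := chainX G (n - 1) e he (by omega)
  have hnest := nestedX hcn
  -- facts
  have h1 : ∀ i j : ℕ, i < j → j ≤ n - 1 → ((c i).1 : ℕ) < (c j).1 ∧ ((c j).2 : ℕ) < (c i).2 :=
    fun i j hij hj => ⟨(hnest j i hij hj).1, (hnest j i hij hj).2⟩
  have hg : ∀ i ≤ n - 1, ((c i).1 : ℕ) < (c i).2 := fun i hi => (hcg i hi).1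
  apply hG
  refine ⟨fun x => if (x : ℕ) < n then (c x).1 else (c (2 * n - 1 - x)).2, ?_, ?_⟩
  · intro x y hxy
    rw [Fin.lt_def] at hxy ⊢
    have hx2 : (x : ℕ) < 2 * n := x.isLt
    have hy2 : (y : ℕ) < 2 * n := y.isLt
    by_cases hx : (x : ℕ) < n <;> by_cases hy : (y : ℕ) < n <;>
      simp only [hx, hy, if_pos, if_neg, if_true, if_false]
    · exact (h1 x y hxy (by omega)).1
    · -- x < n ≤ y
      set b := 2 * n - 1 - (y : ℕ) with hb
      have hbn : b ≤ n - 1 := by omega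
      rcases Nat.lt_trichotomy (x : ℕ) b with h | h | h
      · exact lt_trans (h1 x b h hbn).1 (hg b hbn)
      · rw [← h]; exact hg x (by omega)
      · exact lt_trans (hg x (by omega)) (h1 b x h (by omega)).2
    · omega
    · -- both ≥ n
      set a := 2 * n - 1 - (x : ℕ) with ha
      set b := 2 * n - 1 - (y : ℕ) with hb
      exact (h1 b a (by omega) (by omega)).2
  · intro i j hadj
    rw [nestedMatching, SimpleGraph.fromRel_adj] at hadj
    have hsum : (i : ℕ) + (j : ℕ) = 2 * n - 1 := by
      rcases hadj.2 with h | h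
      · exact h
      · omega
    have hne : (i : ℕ) ≠ (j : ℕ) := fun h => hadj.1 (Fin.ext h)
    have hi2 : (i : ℕ) < 2 * n := i.isLt
    have hj2 : (j : ℕ) < 2 * n := j.isLt
    rcases Nat.lt_or_ge (i : ℕ) n with hi | hi
    · have hjn : ¬ ((j : ℕ) < n) := by omega
      have hidx : 2 * n - 1 - (j : ℕ) = (i : ℕ) := by omega
      simp only [hi, hjn, if_pos, if_neg, if_true, if_false, hidx]
      exact (hcg i (by omega)).2
    · have hjn : (j : ℕ) < n := by omega
      have hidx : 2 * n - 1 - (i : ℕ) = (j : ℕ) := by omega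
      have hni : ¬ ((i : ℕ) < n) := by omega
      simp only [hjn, hni, if_pos, if_neg, if_true, if_false, hidx]
      exact ((hcg j (by omega)).2).symm

lemma sum_helperX : ∀ m M : ℕ, 2 * m + 2 ≤ M →
    ∑ j ∈ Finset.range m, ((2 * M - 2 * (1 + j) - 1) + 1 - (2 * (1 + j) - 1))
      = m * (2 * M - 2 * m - 1) := by
  intro m
  induction m with
  | zero => intro M _; simp
  | succ m ih =>
    intro M hM
    rw [Finset.sum_range_succ, ih M (by omega)]
    obtain ⟨C, hC⟩ : ∃ C, M = C + 2 * m + 4 := ⟨M - 2 * m - 4, by omega⟩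
    subst hC
    have h1 : 2 * (C + 2 * m + 4) - 2 * m - 1 = 2 * C + 2 * m + 7 := by omega
    have h2 : (2 * (C + 2 * m + 4) - 2 * (1 + m) - 1) + 1 - (2 * (1 + m) - 1)
        = 2 * C + 5 := by omega
    have h3 : 2 * (C + 2 * m + 4) - 2 * (m + 1) - 1 = 2 * C + 2 * m + 5 := by omega
    rw [h1, h2, h3]
    ring


end Helpers

/-- For every positive integer `n` and every `N ≥ 2n`, an ordered graph on
`[N]` with no ordered-subgraph copy of `NM_n` has at most `(n - 1)(2N - 2n + 1)` edges. -/
theorem stmt_14 (n N : ℕ) (hn : 1 ≤ n) (hN : 2 * n ≤ N) (G : SimpleGraph (Fin N))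
    (hG : ¬ OrderedSubgraph (nestedMatching n) G) :
    G.edgeSet.ncard ≤ (n - 1) * (2 * N - 2 * n + 1) := by
  classical
  set E' : Finset (Fin N × Fin N) :=
    Finset.univ.filter (fun p : Fin N × Fin N => (p.1 : ℕ) < p.2 ∧ G.Adj p.1 p.2) with hE'
  have hmemE' : ∀ p : Fin N × Fin N, p ∈ E' ↔ ((p.1 : ℕ) < p.2 ∧ G.Adj p.1 p.2) := by
    intro p
    simp [hE']
  -- Step 1: edgeSet.ncard = E'.card
  have hset : G.edgeSet = (fun p : Fin N × Fin N => s(p.1, p.2)) '' ↑E' := by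
    ext s
    constructor
    · intro hs
      induction s using Sym2.ind with
      | _ a b =>
        rw [SimpleGraph.mem_edgeSet] at hs
        rcases lt_or_gt_of_ne hs.ne with h | h
        · exact ⟨(a, b), by simp [hmemE', Fin.lt_def.mp h, hs], rfl⟩
        · exact ⟨(b, a), by simp [hmemE', Fin.lt_def.mp h, hs.symm], Sym2.eq_swap⟩
    · rintro ⟨p, hp, rfl⟩
      rw [Finset.mem_coe, hmemE'] at hp
      exact hp.2
  have hinj1 : Set.InjOn (fun p : Fin N × Fin N => s(p.1, p.2)) ↑E' := by
    intro p hp q hq hpq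
    rw [Finset.mem_coe, hmemE'] at hp hq
    simp only [Sym2.eq_iff] at hpq
    rcases hpq with ⟨h1, h2⟩ | ⟨h1, h2⟩
    · exact Prod.ext h1 h2
    · exfalso
      have e1 : (p.1 : ℕ) = q.2 := congrArg Fin.val h1
      have e2 : (p.2 : ℕ) = q.1 := congrArg Fin.val h2
      omega
  have hcard1 : G.edgeSet.ncard = E'.card := by
    rw [hset, Set.ncard_image_of_injOn hinj1, Set.ncard_coe_finset]
  -- Step 2: the target finset T
  set T : Finset (ℕ × ℕ) := (Finset.Icc 1 (n - 1)).biUnion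
    (fun k => {k} ×ˢ Finset.Icc (2 * k - 1) (2 * N - 2 * k - 1)) with hT
  have hble := depthX_le hn G hG
  have hcard2 : E'.card ≤ T.card := by
    apply Finset.card_le_card_of_injOn (fun p => (depthX G p, (p.1 : ℕ) + (p.2 : ℕ)))
    · intro p hp
      rw [Finset.mem_coe, hmemE'] at hp
      have hgood : goodX G p := ⟨hp.1, hp.2⟩
      have hd1 := depthX_pos G p
      have hd2 := hble p hgood
      have hspan := spanX G (depthX G p) p hgood rfl
      have hp2 : (p.2 : ℕ) < N := p.2.isLt
      rw [hT]
      rw [Finset.mem_coe, Finset.mem_biUnion]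
      beta_reduce
      refine ⟨depthX G p, Finset.mem_Icc.mpr ⟨hd1, hd2⟩, ?_⟩
      rw [Finset.mem_product, Finset.mem_singleton, Finset.mem_Icc]
      exact ⟨rfl, by omega, by omega⟩
    · intro p hp q hq hpq
      rw [Finset.mem_coe, hmemE'] at hp hq
      simp only [Prod.mk.injEq] at hpq
      obtain ⟨hd, hs⟩ := hpq
      rcases Nat.lt_trichotomy (p.1 : ℕ) (q.1 : ℕ) with h | h | h
      · exfalso
        have hin : insideX q p := ⟨h, by omega⟩
        have := depthX_lt G ⟨hq.1, hq.2⟩ hin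
        omega
      · have h2 : (p.2 : ℕ) = (q.2 : ℕ) := by omega
        exact Prod.ext (Fin.ext h) (Fin.ext h2)
      · exfalso
        have hin : insideX p q := ⟨h, by omega⟩
        have := depthX_lt G ⟨hp.1, hp.2⟩ hin
        omega
  -- Step 3: T.card = (n-1) * (2N - 2n + 1)
  have hcard3 : T.card = (n - 1) * (2 * N - 2 * n + 1) := by
    rw [hT, Finset.card_biUnion]
    · have hterm : ∀ k ∈ Finset.Icc 1 (n - 1),
          ({k} ×ˢ Finset.Icc (2 * k - 1) (2 * N - 2 * k - 1)).card
          = (2 * N - 2 * k - 1) + 1 - (2 * k - 1) := by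
        intro k _
        rw [Finset.card_product, Finset.card_singleton, one_mul, Nat.card_Icc]
      rw [Finset.sum_congr rfl hterm]
      have himg : Finset.Icc 1 (n - 1) = Finset.image (fun j => 1 + j) (Finset.range (n - 1)) := by
        ext x
        simp only [Finset.mem_Icc, Finset.mem_image, Finset.mem_range]
        constructor
        · intro ⟨h1, h2⟩; exact ⟨x - 1, by omega, by omega⟩
        · rintro ⟨j, hj, rfl⟩; omega
      rw [himg, Finset.sum_image (by intro a _ b _ h; simp only at h; omega)]
      rw [sum_helperX (n - 1) N (by omega)]
      have : 2 * N - 2 * (n - 1) - 1 = 2 * N - 2 * n + 1 := by omega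
      rw [this]
    · intro a ha b hb hab
      simp only [Finset.disjoint_left]
      intro x hxa hxb
      rw [Finset.mem_product, Finset.mem_singleton] at hxa hxb
      exact hab (hxa.1 ▸ hxb.1)
  omega
end

section
/- For every positive integer n and every integer N ≥ 2n, the ordered graph H on [N] whose edge set consists of all pairs {i, j} with 1 ≤ |i − j| ≤ 2n − 2 has exactly (n − 1)(2N − 2n + 1) edges and does not contain the nested matching NM_n as an ordered subgraph. Consequently, the upper bound (n − 1)(2N − 2n + 1) on the number of edges of an ordered graph on [N] with no ordered subgraph copy of NM_n is attained. -/
lemma gap_lemma {m N : ℕ} (φ : Fin m → Fin N) (h : StrictMono φ) :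
    ∀ d (i j : Fin m), (j : ℕ) = (i : ℕ) + d → (φ i : ℕ) + d ≤ (φ j : ℕ) := by
  intro d
  induction d with
  | zero =>
    intro i j hij
    have : i = j := Fin.ext (by omega)
    subst this; simp
  | succ d ih =>
    intro i j hij
    have hd : (i : ℕ) + d < m := by have := j.isLt; omega
    have h1 := ih i ⟨(i : ℕ) + d, hd⟩ rfl
    have h2 : φ ⟨(i : ℕ) + d, hd⟩ < φ j := h (by rw [Fin.lt_def]; simp; omega)
    rw [Fin.lt_def] at h2
    omega

lemma sum_aux2 (k t : ℕ) :
    ∑ j ∈ Finset.range (k + 1 + t), (j - (j - k)) = (k + 1) * k / 2 + t * k := by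
  induction t with
  | zero =>
    have h1 : ∑ j ∈ Finset.range (k + 1), (j - (j - k)) = ∑ j ∈ Finset.range (k + 1), j := by
      apply Finset.sum_congr rfl
      intro j hj
      rw [Finset.mem_range] at hj
      omega
    simp [h1, Finset.sum_range_id]
  | succ t ih =>
    have : k + 1 + (t + 1) = (k + 1 + t) + 1 := by omega
    rw [this, Finset.sum_range_succ, ih]
    have : k + 1 + t - (k + 1 + t - k) = k := by omega
    rw [this]
    ring

/-- For every positive `n` and `N ≥ 2n`, the ordered graph on `[N]` whose
edges are all pairs at distance between `1` and `2n - 2` has exactly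
`(n - 1)(2N - 2n + 1)` edges and contains no ordered copy of `NM_n`; hence the upper
bound on the number of edges of `NM_n`-free ordered graphs on `[N]` is attained. -/
theorem stmt_15 (n N : ℕ) (hn : 1 ≤ n) (hN : 2 * n ≤ N) :
    (SimpleGraph.fromRel
        (fun i j : Fin N => (i : ℕ) < (j : ℕ) ∧ (j : ℕ) - (i : ℕ) ≤ 2 * n - 2)).edgeSet.ncard
        = (n - 1) * (2 * N - 2 * n + 1) ∧
    ¬ OrderedSubgraph (nestedMatching n)
        (SimpleGraph.fromRel
          (fun i j : Fin N => (i : ℕ) < (j : ℕ) ∧ (j : ℕ) - (i : ℕ) ≤ 2 * n - 2)) := by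
  classical
  set k := 2 * n - 2 with hk
  set G := SimpleGraph.fromRel
      (fun i j : Fin N => (i : ℕ) < (j : ℕ) ∧ (j : ℕ) - (i : ℕ) ≤ 2 * n - 2) with hGdef
  constructor
  · -- counting
    set P : Finset (Fin N × Fin N) :=
      Finset.univ.filter (fun p : Fin N × Fin N =>
        (p.1 : ℕ) < (p.2 : ℕ) ∧ (p.2 : ℕ) - (p.1 : ℕ) ≤ 2 * n - 2) with hP
    have h1 : G.edgeSet.ncard = G.edgeSet.toFinset.card := Set.ncard_eq_toFinset_card' _
    have h2 : G.edgeSet.toFinset.card = P.card := by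
      symm
      refine Finset.card_bij (s := P) (t := G.edgeSet.toFinset) (fun p _ => Sym2.mk p.1 p.2) ?_ ?_ ?_
      · intro p hp
        rw [hP, Finset.mem_filter] at hp
        rw [Set.mem_toFinset]
        have : G.Adj p.1 p.2 := by
          rw [hGdef, SimpleGraph.fromRel_adj]
          exact ⟨by intro he; rw [he] at hp; omega, Or.inl hp.2⟩
        exact this
      · intro p₁ hp₁ p₂ hp₂ he
        rw [hP, Finset.mem_filter] at hp₁ hp₂
        have := Sym2.mk_eq_mk_iff.mp he
        rcases this with h | h
        · exact h
        · exfalso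
          have e1 : p₁.1 = p₂.2 := congrArg Prod.fst h
          have e2 : p₁.2 = p₂.1 := congrArg Prod.snd h
          rw [e1, e2] at hp₁
          omega
      · intro e he
        rw [Set.mem_toFinset] at he
        induction e with
        | _ a b =>
          rw [SimpleGraph.mem_edgeSet, hGdef, SimpleGraph.fromRel_adj] at he
          rcases he.2 with h | h
          · exact ⟨(a, b), by rw [hP, Finset.mem_filter]; exact ⟨Finset.mem_univ _, h⟩, rfl⟩
          · exact ⟨(b, a), by rw [hP, Finset.mem_filter]; exact ⟨Finset.mem_univ _, h⟩,
              Sym2.eq_swap⟩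
    have h3 : P.card = ∑ j ∈ Finset.range N, (j - (j - k)) := by
      rw [hP, Finset.card_filter, Fintype.sum_prod_type, Finset.sum_comm]
      rw [Fin.sum_univ_eq_sum_range
        (fun j => ∑ i : Fin N, if (i : ℕ) < j ∧ j - (i : ℕ) ≤ 2 * n - 2 then 1 else 0)]
      apply Finset.sum_congr rfl
      intro j hj
      rw [Finset.mem_range] at hj
      rw [Fin.sum_univ_eq_sum_range (fun i => if i < j ∧ j - i ≤ 2 * n - 2 then 1 else 0)]
      rw [← Finset.card_filter]
      have : (Finset.range N).filter (fun i => i < j ∧ j - i ≤ 2 * n - 2)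
          = Finset.Ico (j - k) j := by
        ext i
        simp only [Finset.mem_filter, Finset.mem_range, Finset.mem_Ico, hk]
        omega
      rw [this, Nat.card_Ico]
    obtain ⟨a, rfl⟩ : ∃ a, n = a + 1 := ⟨n - 1, by omega⟩
    obtain ⟨t, ht⟩ : ∃ t, N = k + 1 + t := ⟨N - k - 1, by omega⟩
    rw [h1, h2, h3, ht, sum_aux2]
    have hk2 : k = 2 * a := by omega
    rw [hk2]
    have e1 : (2 * a + 1) * (2 * a) / 2 = a * (2 * a + 1) := by
      rw [show (2 * a + 1) * (2 * a) = (a * (2 * a + 1)) * 2 by ring]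
      exact Nat.mul_div_cancel _ (by norm_num)
    rw [e1]
    have e2 : a + 1 - 1 = a := by omega
    have e3 : 2 * (2 * a + 1 + t) - 2 * (a + 1) + 1 = 2 * a + 2 * t + 1 := by omega
    rw [e2, e3]
    ring
  · rintro ⟨φ, hmono, hadj⟩
    have h2n : 0 < 2 * n := by omega
    have hlt : 2 * n - 1 < 2 * n := by omega
    have hadj0 : (nestedMatching n).Adj ⟨0, h2n⟩ ⟨2 * n - 1, hlt⟩ := by
      rw [nestedMatching, SimpleGraph.fromRel_adj]
      constructor
      · intro he
        have := congrArg Fin.val he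
        simp at this
        omega
      · left; simp
    have := hadj _ _ hadj0
    rw [hGdef, SimpleGraph.fromRel_adj] at this
    have hgap := gap_lemma φ hmono (2 * n - 1) ⟨0, h2n⟩ ⟨2 * n - 1, hlt⟩ (by simp)
    obtain ⟨hne, h | h⟩ := this <;> omega
end

section
/- For every positive integer n, if an ordered graph G on [N] is covered by n − 1 pairwise disjoint routes, then G does not contain the nested matching NM_n as an ordered subgraph. -/
lemma route_comparable {N : ℕ} {s : List (Fin N × Fin N)} (hs : IsRoute s)
    {p q : Fin N × Fin N} (hp : p ∈ s) (hq : q ∈ s) : p ≤ q ∨ q ≤ p := by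
  have hs' : s.Chain' (· ≤ ·) := by
    refine hs.imp ?_
    intro p q h
    refine Prod.le_def.2 ⟨?_, ?_⟩ <;>
      rcases h with ⟨h1, h2⟩ | ⟨h1, h2⟩ <;>
        simp only [Fin.le_def, Fin.ext_iff] at * <;> omega
  change List.IsChain (· ≤ ·) s at hs'
  rw [List.isChain_iff_pairwise, List.pairwise_iff_get] at hs'
  obtain ⟨i, rfl⟩ := List.mem_iff_get.1 hp
  obtain ⟨j, rfl⟩ := List.mem_iff_get.1 hq
  rcases lt_trichotomy i j with h | h | h
  · exact Or.inl (hs' i j h)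
  · exact Or.inl (le_of_eq (by rw [h]))
  · exact Or.inr (hs' j i h)

/-- For every positive `n`, if an ordered graph `G` on `[N]` is covered by
`n - 1` pairwise disjoint routes, then `G` contains no ordered copy of `NM_n`. -/
theorem stmt_16 (n N : ℕ) (hn : 1 ≤ n) (G : SimpleGraph (Fin N))
    (routes : Fin (n - 1) → List (Fin N × Fin N))
    (hroutes : ∀ k, IsRoute (routes k))
    (hdisj : ∀ k l, k ≠ l → ∀ p, p ∈ routes k → p ∉ routes l)
    (hcover : ∀ i j : Fin N, G.Adj i j → i < j → ∃ k, (i, j) ∈ routes k) :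
    ¬ OrderedSubgraph (nestedMatching n) G := by
  rintro ⟨φ, hmono, hadj⟩
  let a : Fin n → Fin (2 * n) := fun i => ⟨i.1, by have := i.2; omega⟩
  let b : Fin n → Fin (2 * n) := fun i => ⟨2 * n - 1 - i.1, by have := i.2; omega⟩
  have hab : ∀ i : Fin n, (a i : ℕ) = i.1 ∧ (b i : ℕ) = 2 * n - 1 - i.1 := fun i => ⟨rfl, rfl⟩
  have hedge : ∀ i : Fin n, (nestedMatching n).Adj (a i) (b i) := by
    intro i
    have hi := i.2
    rw [nestedMatching, SimpleGraph.fromRel_adj]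
    refine ⟨?_, Or.inl ?_⟩
    · intro h
      have := congrArg Fin.val h
      simp only [(hab i).1, (hab i).2] at this
      omega
    · simp only [(hab i).1, (hab i).2]; omega
  have hlt : ∀ i : Fin n, φ (a i) < φ (b i) := by
    intro i
    apply hmono
    have hi := i.2
    simp only [Fin.lt_def, (hab i).1, (hab i).2]
    omega
  have hG : ∀ i : Fin n, ∃ k, (φ (a i), φ (b i)) ∈ routes k := fun i =>
    hcover _ _ (hadj _ _ (hedge i)) (hlt i)
  choose k hk using hG
  have hinj : Function.Injective k := by
    intro i j hij
    by_contra hne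
    have key : ∀ i j : Fin n, i < j → k i = k j → False := by
      intro i j hlt' heq
      have h1 : φ (a i) < φ (a j) := by
        apply hmono; simp only [Fin.lt_def, (hab i).1, (hab j).1]; exact hlt'
      have h2 : φ (b j) < φ (b i) := by
        apply hmono
        have hi := i.2; have hj := j.2
        simp only [Fin.lt_def, (hab i).2, (hab j).2]
        omega
      have := route_comparable (hroutes (k i)) (hk i) (heq ▸ hk j)
      rcases this with ⟨_, h⟩ | ⟨h, _⟩
      · exact absurd h (not_le.2 h2)
      · exact absurd h (not_le.2 h1)
    rcases lt_or_gt_of_ne hne with h | h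
    · exact key _ _ h hij
    · exact key _ _ h hij.symm
  have := Fintype.card_le_of_injective k hinj
  simp only [Fintype.card_fin] at this
  omega
end

section
/- Let G be a connected ordered graph, let n be a positive integer, set N = r_<(G, K_n), and let M ≥ N. Then every red-blue coloring of the edges of the complete ordered graph K_M either contains a blue copy of K_n as an ordered subgraph, or there exist M − N + 1 distinct vertices of K_M each of which is the rightmost vertex of some red ordered-subgraph copy of G (i.e., the maximum of the image of the embedding of that copy). -/
section Aux
open Finset SimpleGraph


lemma isNClique_map {N K k : ℕ} {R' : SimpleGraph (Fin K)} {R : SimpleGraph (Fin N)}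
    (f : Fin K ↪o Fin N) (hf : ∀ a b, R'.Adj a b → R.Adj (f a) (f b))
    {t : Finset (Fin K)} (ht : R'.IsNClique k t) :
    R.IsNClique k (t.map f.toEmbedding) := by
  constructor
  · intro a ha b hb hab
    simp only [coe_map, Set.mem_image, mem_coe] at ha hb
    obtain ⟨a', ha', rfl⟩ := ha
    obtain ⟨b', hb', rfl⟩ := hb
    have hne : a' ≠ b' := by rintro rfl; exact hab rfl
    exact hf _ _ (ht.1 ha' hb' hne)
  · rw [Finset.card_map]; exact ht.2

lemma ramsey_exists : ∀ m n : ℕ, ∃ N : ℕ, ∀ R : SimpleGraph (Fin N),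
    (∃ s, R.IsNClique m s) ∨ (∃ s, Rᶜ.IsNClique n s) := by
  intro m
  induction m with
  | zero => exact fun n => ⟨0, fun R => Or.inl ⟨∅, by simp⟩⟩
  | succ m ihm =>
    intro n
    induction n with
    | zero => exact ⟨0, fun R => Or.inr ⟨∅, by simp⟩⟩
    | succ n ihn =>
      obtain ⟨N₁, h₁⟩ := ihm (n + 1)
      obtain ⟨N₂, h₂⟩ := ihn
      refine ⟨N₁ + N₂ + 1, ?_⟩
      intro R
      classical
      set v : Fin (N₁ + N₂ + 1) := ⟨N₁ + N₂, by omega⟩ with hv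
      set A : Finset (Fin (N₁ + N₂ + 1)) := univ.filter (fun x => R.Adj v x) with hA
      set B : Finset (Fin (N₁ + N₂ + 1)) := univ.filter (fun x => x ≠ v ∧ ¬ R.Adj v x) with hB
      have hunion : A ∪ B = univ.erase v := by
        ext x
        simp only [hA, hB, mem_union, mem_filter, mem_univ, true_and, mem_erase]
        constructor
        · rintro (h | h)
          · exact ⟨h.ne', trivial⟩
          · exact ⟨h.1, trivial⟩
        · rintro ⟨hne, -⟩
          by_cases hadj : R.Adj v x
          · exact Or.inl hadj
          · exact Or.inr ⟨hne, hadj⟩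
      have hdisj : Disjoint A B := by
        rw [Finset.disjoint_left]
        intro x hx hx'
        simp only [hA, mem_filter] at hx
        simp only [hB, mem_filter] at hx'
        exact hx'.2.2 hx.2
      have hcard : A.card + B.card = N₁ + N₂ := by
        have := Finset.card_union_of_disjoint hdisj
        rw [hunion] at this
        have h2 : (univ.erase v).card = N₁ + N₂ := by
          rw [Finset.card_erase_of_mem (mem_univ v), card_univ, Fintype.card_fin]; omega
        omega
      by_cases hAc : N₁ ≤ A.card
      · obtain ⟨s, hs, hscard⟩ := Finset.exists_subset_card_eq hAc
        set f := s.orderEmbOfFin hscard with hf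
        have hmem : ∀ i, f i ∈ A := fun i => hs (Finset.orderEmbOfFin_mem s hscard i)
        rcases h₁ (R.comap f) with ⟨t, ht⟩ | ⟨t, ht⟩
        · left
          have ht' : R.IsNClique m (t.map f.toEmbedding) :=
            isNClique_map f (fun a b h => h) ht
          refine ⟨insert v (t.map f.toEmbedding), ht'.insert ?_⟩
          intro b hb
          simp only [Finset.mem_map] at hb
          obtain ⟨b', _, rfl⟩ := hb
          have := hmem b'
          simp only [hA, mem_filter] at this
          exact this.2
        · right
          refine ⟨t.map f.toEmbedding, isNClique_map f ?_ ht⟩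
          intro a b h
          rw [SimpleGraph.compl_adj] at h ⊢
          exact ⟨fun he => h.1 (f.injective he), fun ha => h.2 (by simpa using ha)⟩
      · have hBc : N₂ ≤ B.card := by omega
        obtain ⟨s, hs, hscard⟩ := Finset.exists_subset_card_eq hBc
        set f := s.orderEmbOfFin hscard with hf
        have hmem : ∀ i, f i ∈ B := fun i => hs (Finset.orderEmbOfFin_mem s hscard i)
        rcases h₂ (R.comap f) with ⟨t, ht⟩ | ⟨t, ht⟩
        · exact Or.inl ⟨t.map f.toEmbedding, isNClique_map f (fun a b h => h) ht⟩
        · right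
          have ht' : Rᶜ.IsNClique n (t.map f.toEmbedding) := by
            refine isNClique_map f ?_ ht
            intro a b h
            rw [SimpleGraph.compl_adj] at h ⊢
            exact ⟨fun he => h.1 (f.injective he), fun ha => h.2 (by simpa using ha)⟩
          refine ⟨insert v (t.map f.toEmbedding), ht'.insert ?_⟩
          intro b hb
          simp only [Finset.mem_map] at hb
          obtain ⟨b', _, rfl⟩ := hb
          have := hmem b'
          simp only [hB, mem_filter] at this
          rw [SimpleGraph.compl_adj]
          exact ⟨fun he => this.2.1 he.symm, this.2.2⟩


lemma ramsey_set_nonempty (m n : ℕ) (G : SimpleGraph (Fin m)) :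
    {N : ℕ | ∀ R : SimpleGraph (Fin N),
      OrderedSubgraph G R ∨ OrderedSubgraph (⊤ : SimpleGraph (Fin n)) Rᶜ}.Nonempty := by
  obtain ⟨N, hN⟩ := ramsey_exists m n
  refine ⟨N, fun R => ?_⟩
  rcases hN R with ⟨s, hs⟩ | ⟨s, hs⟩
  · left
    refine ⟨s.orderEmbOfFin hs.2, (s.orderEmbOfFin hs.2).strictMono, fun i j h => ?_⟩
    exact hs.1 (Finset.orderEmbOfFin_mem s hs.2 i) (Finset.orderEmbOfFin_mem s hs.2 j)
      (fun he => h.ne ((s.orderEmbOfFin hs.2).injective he))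
  · right
    refine ⟨s.orderEmbOfFin hs.2, (s.orderEmbOfFin hs.2).strictMono, fun i j h => ?_⟩
    exact hs.1 (Finset.orderEmbOfFin_mem s hs.2 i) (Finset.orderEmbOfFin_mem s hs.2 j)
      (fun he => h.ne ((s.orderEmbOfFin hs.2).injective he))

end Aux

/-- Let `G` be a connected ordered graph, `N = r_<(G, K_n)` and `M ≥ N`.
Every red-blue coloring of the edges of `K_M` (given by its red graph `R`) contains a
blue copy of `K_n`, or there are `M - N + 1` vertices each of which is the rightmost
vertex of a red ordered copy of `G`. -/
theorem stmt_17 (m n : ℕ) (hn : 1 ≤ n) (G : SimpleGraph (Fin m)) (hG : G.Connected)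
    (M : ℕ) (hM : orderedRamsey G (⊤ : SimpleGraph (Fin n)) ≤ M)
    (R : SimpleGraph (Fin M)) :
    OrderedSubgraph (⊤ : SimpleGraph (Fin n)) Rᶜ ∨
    ∃ S : Finset (Fin M),
      S.card = M - orderedRamsey G (⊤ : SimpleGraph (Fin n)) + 1 ∧
      ∀ v ∈ S, ∃ φ : Fin m → Fin M, StrictMono φ ∧
        (∀ i j : Fin m, G.Adj i j → R.Adj (φ i) (φ j)) ∧
        (∀ i, φ i ≤ v) ∧ (∃ i, φ i = v) := by
  classical
  set N := orderedRamsey G (⊤ : SimpleGraph (Fin n)) with hNdef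
  by_cases hblue : OrderedSubgraph (⊤ : SimpleGraph (Fin n)) Rᶜ
  · exact Or.inl hblue
  right
  have hNmem : ∀ R' : SimpleGraph (Fin N), OrderedSubgraph G R' ∨
      OrderedSubgraph (⊤ : SimpleGraph (Fin n)) R'ᶜ :=
    Nat.sInf_mem (ramsey_set_nonempty m n G)
  set P : Fin M → Prop := fun v => ∃ φ : Fin m → Fin M, StrictMono φ ∧
      (∀ i j : Fin m, G.Adj i j → R.Adj (φ i) (φ j)) ∧
      (∀ i, φ i ≤ v) ∧ (∃ i, φ i = v) with hP
  set T : Finset (Fin M) := Finset.univ.filter P with hT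
  have hTcard : M - N + 1 ≤ T.card := by
    by_contra hlt
    push_neg at hlt
    have hC : N ≤ (Finset.univ \ T).card := by
      rw [Finset.card_sdiff_of_subset (Finset.subset_univ T), Finset.card_univ, Fintype.card_fin]
      omega
    obtain ⟨C', hC'sub, hC'card⟩ := Finset.exists_subset_card_eq hC
    set f := C'.orderEmbOfFin hC'card with hf
    have hfmem : ∀ i, f i ∈ Finset.univ \ T :=
      fun i => hC'sub (Finset.orderEmbOfFin_mem C' hC'card i)
    rcases hNmem (SimpleGraph.comap f R) with ⟨ψ, hψmono, hψadj⟩ | ⟨ψ, hψmono, hψadj⟩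
    · set φ : Fin m → Fin M := fun i => f (ψ i) with hφ
      have hφmono : StrictMono φ := fun a b h => f.strictMono (hψmono h)
      have hφadj : ∀ i j : Fin m, G.Adj i j → R.Adj (φ i) (φ j) := fun i j h => hψadj i j h
      have hmne : (Finset.univ : Finset (Fin m)).Nonempty := by
        have : Nonempty (Fin m) := hG.nonempty
        exact Finset.univ_nonempty
      obtain ⟨i0, -, hi0⟩ := Finset.exists_max_image Finset.univ φ hmne
      have hmemT : φ i0 ∈ T := by
        rw [hT, Finset.mem_filter]
        exact ⟨Finset.mem_univ _, φ, hφmono, hφadj, fun i => hi0 i (Finset.mem_univ i),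
          ⟨i0, rfl⟩⟩
      exact (Finset.mem_sdiff.mp (hfmem (ψ i0))).2 hmemT
    · refine hblue ⟨fun i => f (ψ i), fun a b h => f.strictMono (hψmono h), fun i j h => ?_⟩
      have h2 := hψadj i j h
      rw [SimpleGraph.compl_adj] at h2 ⊢
      exact ⟨fun he => h2.1 (f.injective he), fun ha => h2.2 (by simpa using ha)⟩
  obtain ⟨S, hSsub, hScard⟩ := Finset.exists_subset_card_eq hTcard
  refine ⟨S, hScard, fun v hv => ?_⟩
  have := hSsub hv
  rw [hT, Finset.mem_filter] at this
  exact this.2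
end

section
/- For all positive integers k and N, if r_<(NM_{k+1}, K_3) > N, then there exists an ordered graph on [N] that does not contain the nested matching NM_{k+1} as an ordered subgraph and whose chromatic number is at least ⌈N/2⌉. -/
lemma triple_sub {N : ℕ} (H : SimpleGraph (Fin N)) (a b c : Fin N)
    (hab : a < b) (hbc : b < c)
    (h1 : H.Adj a b) (h2 : H.Adj a c) (h3 : H.Adj b c) :
    OrderedSubgraph (⊤ : SimpleGraph (Fin 3)) H := by
  refine ⟨![a, b, c], ?_, ?_⟩
  · intro i j hij
    fin_cases i <;> fin_cases j <;>
      simp_all [Matrix.cons_val_zero, Matrix.cons_val_one] <;>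
      first | exact hab | exact hbc | exact hab.trans hbc | omega
  · intro i j hij
    fin_cases i <;> fin_cases j <;> simp_all <;>
      first | exact h1 | exact h2 | exact h3 | exact h1.symm | exact h2.symm | exact h3.symm

lemma triple_sub' {N : ℕ} (H : SimpleGraph (Fin N)) (a b c : Fin N)
    (hab : a ≠ b) (hac : a ≠ c) (hbc : b ≠ c)
    (h1 : H.Adj a b) (h2 : H.Adj a c) (h3 : H.Adj b c) :
    OrderedSubgraph (⊤ : SimpleGraph (Fin 3)) H := by
  rcases lt_trichotomy a b with h | h | h
  · rcases lt_trichotomy b c with h' | h' | h'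
    · exact triple_sub H a b c h h' h1 h2 h3
    · exact absurd h' hbc
    · rcases lt_trichotomy a c with h'' | h'' | h''
      · exact triple_sub H a c b h'' h' h2 h1 h3.symm
      · exact absurd h'' hac
      · exact triple_sub H c a b h'' h h2.symm h3.symm h1
  · exact absurd h hab
  · rcases lt_trichotomy a c with h' | h' | h'
    · exact triple_sub H b a c h h' h1.symm h3 h2
    · exact absurd h' hac
    · rcases lt_trichotomy b c with h'' | h'' | h''
      · exact triple_sub H b c a h'' h' h3 h1.symm h2.symm
      · exact absurd h'' hbc
      · exact triple_sub H c b a h'' h h3.symm h2.symm h1.symm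

/-- For all positive `k` and `N`, if `r_<(NM_{k+1}, K_3) > N`, then there
is an ordered graph on `[N]` with no ordered copy of `NM_{k+1}` and chromatic number at
least `⌈N / 2⌉`. -/
theorem stmt_18 (k N : ℕ) (hk : 1 ≤ k) (hN : 1 ≤ N)
    (h : N < orderedRamsey (nestedMatching (k + 1)) (⊤ : SimpleGraph (Fin 3))) :
    ∃ G : SimpleGraph (Fin N),
      ¬ OrderedSubgraph (nestedMatching (k + 1)) G ∧
      (((N + 1) / 2 : ℕ) : ℕ∞) ≤ G.chromaticNumber := by
  -- N is not in the Ramsey set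
  have hNmem : N ∉ {M : ℕ | ∀ R : SimpleGraph (Fin M),
      OrderedSubgraph (nestedMatching (k + 1)) R ∨
      OrderedSubgraph (⊤ : SimpleGraph (Fin 3)) Rᶜ} := by
    intro hmem
    exact absurd (Nat.sInf_le hmem) (not_le.mpr h)
  simp only [Set.mem_setOf_eq, not_forall] at hNmem
  obtain ⟨R, hR⟩ := hNmem
  push_neg at hR
  obtain ⟨hR1, hR2⟩ := hR
  refine ⟨R, hR1, ?_⟩
  -- every color class has at most 2 elements, since 3 independent vertices give K3 in Rᶜ
  have key : ∀ n : ℕ, R.Colorable n → (N + 1) / 2 ≤ n := by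
    intro n ⟨C⟩
    have hfib : ∀ i : Fin n, (Finset.univ.filter (fun v => C v = i)).card ≤ 2 := by
      intro i
      by_contra hc
      push_neg at hc
      rw [Finset.two_lt_card_iff] at hc
      obtain ⟨a, b, c, ha, hb, hcm, hab, hac, hbc⟩ := hc
      simp only [Finset.mem_filter, Finset.mem_univ, true_and] at ha hb hcm
      have adj : ∀ x y : Fin N, x ≠ y → C x = C y → Rᶜ.Adj x y := by
        intro x y hxy hcxy
        refine ⟨hxy, fun hadj => ?_⟩
        exact C.valid hadj hcxy
      exact hR2 (triple_sub' Rᶜ a b c hab hac hbc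
        (adj a b hab (ha.trans hb.symm)) (adj a c hac (ha.trans hcm.symm))
        (adj b c hbc (hb.trans hcm.symm)))
    have hcount : N ≤ 2 * n := by
      have h1 : (Finset.univ : Finset (Fin N)).card =
          ∑ i : Fin n, (Finset.univ.filter (fun v => C v = i)).card := by
        exact Finset.card_eq_sum_card_fiberwise (fun v _ => Finset.mem_univ (C v))
      have h2 : ∑ i : Fin n, (Finset.univ.filter (fun v => C v = i)).card ≤
          ∑ _i : Fin n, 2 := Finset.sum_le_sum (fun i _ => hfib i)
      simp only [Finset.card_univ, Fintype.card_fin, Finset.sum_const,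
        Finset.card_univ, Fintype.card_fin, smul_eq_mul] at h1 h2
      omega
    omega
  rw [SimpleGraph.chromaticNumber_eq_biInf]
  exact le_iInf₂ fun n hn => Nat.cast_le.mpr (key n hn)
end

section
/- For every positive integer n, if a connected ordered graph G is (n+1)-good, then G is n-good. -/
lemma image_const' {m N : ℕ} {G : SimpleGraph (Fin m)} (hc : G.Preconnected)
    {R : SimpleGraph (Fin N)} {φ : Fin m → Fin N}
    (hφ : ∀ i j, G.Adj i j → R.Adj (φ i) (φ j))
    {α : Type} (f : Fin N → α) (hf : ∀ x y, R.Adj x y → f x = f y)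
    (i j : Fin m) : f (φ i) = f (φ j) := by
  suffices h : ∀ i j : Fin m, G.Walk i j → f (φ i) = f (φ j) from
    h i j (hc i j).some
  intro i j w
  induction w with
  | nil => rfl
  | cons h p ih => exact (hf _ _ (hφ _ _ h)).trans ih

lemma mem_up' {m k a b : ℕ} (G : SimpleGraph (Fin m)) (H : SimpleGraph (Fin k)) (hab : a ≤ b)
    (ha : ∀ R : SimpleGraph (Fin a), OrderedSubgraph G R ∨ OrderedSubgraph H Rᶜ) :
    ∀ R : SimpleGraph (Fin b), OrderedSubgraph G R ∨ OrderedSubgraph H Rᶜ := by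
  intro R
  have hcast : StrictMono (Fin.castLE hab) := fun i j h => by
    rw [Fin.lt_def] at h ⊢; exact h
  rcases ha (R.comap (Fin.castLE hab)) with ⟨φ, hmono, hadj⟩ | ⟨φ, hmono, hadj⟩
  · exact Or.inl ⟨fun i => Fin.castLE hab (φ i), hcast.comp hmono,
      fun i j h => hadj i j h⟩
  · refine Or.inr ⟨fun i => Fin.castLE hab (φ i), hcast.comp hmono, fun i j h => ?_⟩
    have := hadj i j h
    rw [SimpleGraph.compl_adj] at this ⊢
    exact ⟨fun he => this.1 (hcast.injective he), fun ha' => this.2 ha'⟩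


/-- For every positive integer `n`, if a connected ordered graph `G` is
`(n+1)`-good, then `G` is `n`-good. -/
theorem stmt_19 (n : ℕ) (hn : 1 ≤ n) (m : ℕ) (G : SimpleGraph (Fin m))
    (hG : G.Connected) (hgood : IsNGood (n + 1) G) :
    IsNGood n G := by
  have hm : 1 ≤ m := Fin.pos_iff_nonempty.mpr hG.nonempty
  obtain ⟨d, rfl⟩ : ∃ d, m = d + 1 := ⟨m - 1, by omega⟩
  obtain ⟨n', rfl⟩ : ∃ k, n = k + 1 := ⟨n - 1, by omega⟩
  obtain ⟨-, hR⟩ := hgood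
  refine ⟨hG, ?_⟩
  -- The big set membership: every coloring of K_{d*(n'+1)+1} contains red G or blue K_{n'+2}
  have hS' : ∀ R : SimpleGraph (Fin (d * (n' + 1) + 1)),
      OrderedSubgraph G R ∨ OrderedSubgraph (⊤ : SimpleGraph (Fin (n' + 1 + 1))) Rᶜ := by
    rw [orderedRamsey] at hR
    have hne : {N : ℕ | ∀ R : SimpleGraph (Fin N), OrderedSubgraph G R ∨
        OrderedSubgraph (⊤ : SimpleGraph (Fin (n' + 1 + 1))) Rᶜ}.Nonempty := by
      by_contra h
      rw [Set.not_nonempty_iff_eq_empty] at h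
      rw [h, Nat.sInf_empty] at hR
      simp at hR
    have hmem := Nat.sInf_mem hne
    rw [hR] at hmem
    have : (d + 1 - 1) * (n' + 1 + 1 - 1) + 1 = d * (n' + 1) + 1 := by simp
    rw [this] at hmem
    exact hmem
  -- Upper bound: d*n'+1 is in the set for K_{n'+1}
  have hmemS : ∀ R : SimpleGraph (Fin (d * n' + 1)),
      OrderedSubgraph G R ∨ OrderedSubgraph (⊤ : SimpleGraph (Fin (n' + 1))) Rᶜ := by
    intro R
    have hMN : d * (n' + 1) + 1 = (d * n' + 1) + d := by ring
    -- extended coloring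
    set R' : SimpleGraph (Fin (d * (n' + 1) + 1)) := SimpleGraph.fromRel (fun x y =>
      ((d * n' + 1) ≤ (x : ℕ) ∧ (d * n' + 1) ≤ (y : ℕ)) ∨
      ∃ a b : Fin (d * n' + 1), R.Adj a b ∧ (x : ℕ) = (a : ℕ) ∧ (y : ℕ) = (b : ℕ)) with hR'def
    have hR'adj : ∀ x y, R'.Adj x y ↔ x ≠ y ∧
        (((d * n' + 1) ≤ (x : ℕ) ∧ (d * n' + 1) ≤ (y : ℕ)) ∨
         ∃ a b : Fin (d * n' + 1), R.Adj a b ∧ ((x : ℕ) = (a : ℕ) ∧ (y : ℕ) = (b : ℕ) ∨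
           (y : ℕ) = (a : ℕ) ∧ (x : ℕ) = (b : ℕ))) := by
      intro x y
      rw [hR'def, SimpleGraph.fromRel_adj]
      constructor
      · rintro ⟨hne, (⟨h1, h2⟩ | ⟨a, b, hab, h1, h2⟩) | (⟨h1, h2⟩ | ⟨a, b, hab, h1, h2⟩)⟩
        · exact ⟨hne, Or.inl ⟨h1, h2⟩⟩
        · exact ⟨hne, Or.inr ⟨a, b, hab, Or.inl ⟨h1, h2⟩⟩⟩
        · exact ⟨hne, Or.inl ⟨h2, h1⟩⟩
        · exact ⟨hne, Or.inr ⟨a, b, hab, Or.inr ⟨h1, h2⟩⟩⟩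
      · rintro ⟨hne, ⟨h1, h2⟩ | ⟨a, b, hab, ⟨h1, h2⟩ | ⟨h1, h2⟩⟩⟩
        · exact ⟨hne, Or.inl (Or.inl ⟨h1, h2⟩)⟩
        · exact ⟨hne, Or.inl (Or.inr ⟨a, b, hab, h1, h2⟩)⟩
        · exact ⟨hne, Or.inr (Or.inr ⟨a, b, hab, h1, h2⟩)⟩
    rcases hS' R' with ⟨φ, hmono, hadj⟩ | ⟨ψ, hmono, hadj⟩
    · -- red copy of G in R'
      -- invariant: which side of (d * n' + 1)
      have hconst : ∀ i j : Fin (d + 1),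
          (if (d * n' + 1) ≤ ((φ i : Fin _) : ℕ) then (1 : ℕ) else 0) =
          (if (d * n' + 1) ≤ ((φ j : Fin _) : ℕ) then (1 : ℕ) else 0) := by
        intro i j
        refine image_const' hG.preconnected hadj
          (fun x => if (d * n' + 1) ≤ (x : ℕ) then (1 : ℕ) else 0) ?_ i j
        intro x y hxy
        rw [hR'adj] at hxy
        obtain ⟨-, ⟨h1, h2⟩ | ⟨a, b, -, ⟨h1, h2⟩ | ⟨h1, h2⟩⟩⟩ := hxy
        · simp [h1, h2]
        all_goals
          have hia := a.isLt
          have hib := b.isLt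
          have hxa : (x : ℕ) < (d * n' + 1) := by omega
          have hyb : (y : ℕ) < (d * n' + 1) := by omega
          simp [Nat.not_le.mpr hxa, Nat.not_le.mpr hyb]
      by_cases h0 : (d * n' + 1) ≤ ((φ ⟨0, by omega⟩ : Fin _) : ℕ)
      · -- all images ≥ (d * n' + 1) : impossible by counting
        exfalso
        have hall : ∀ i, (d * n' + 1) ≤ ((φ i : Fin _) : ℕ) := by
          intro i
          have := hconst ⟨0, by omega⟩ i
          rw [if_pos h0] at this
          by_contra hc
          rw [if_neg hc] at this
          omega
        have hd1 : 0 < d := by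
          rcases Nat.eq_zero_or_pos d with h | h
          · exfalso
            have := hall ⟨0, by omega⟩
            have h2 := (φ ⟨0, by omega⟩).isLt
            omega
          · exact h
        let e : Fin (d + 1) → Fin d := fun i =>
          ⟨(φ i : ℕ) - (d * n' + 1), by have := (φ i).isLt; have := hall i; omega⟩
        have einj : Function.Injective e := by
          intro i j hij
          apply hmono.injective
          apply Fin.ext
          have h1 := hall i
          have h2 := hall j
          have h4 : (φ i : ℕ) - (d * n' + 1) = (φ j : ℕ) - (d * n' + 1) := congrArg Fin.val hij
          omega
        have := Fintype.card_le_of_injective e einj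
        rw [Fintype.card_fin, Fintype.card_fin] at this
        omega
      · -- all images < (d * n' + 1) : red G in R
        left
        have hall : ∀ i, ((φ i : Fin _) : ℕ) < (d * n' + 1) := by
          intro i
          have := hconst ⟨0, by omega⟩ i
          rw [if_neg h0] at this
          by_contra hc
          rw [if_pos (Nat.not_lt.mp hc)] at this
          omega
        refine ⟨fun i => ⟨(φ i : ℕ), hall i⟩, ?_, ?_⟩
        · intro i j hij
          have := hmono hij
          rw [Fin.lt_def] at this ⊢
          exact this
        · intro i j h
          show R.Adj ⟨(φ i : ℕ), hall i⟩ ⟨(φ j : ℕ), hall j⟩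
          have hadj' := hadj i j h
          rw [hR'adj] at hadj'
          obtain ⟨-, ⟨h1, h2⟩ | ⟨a, b, hab, ⟨h1, h2⟩ | ⟨h1, h2⟩⟩⟩ := hadj'
          · exact absurd h1 (Nat.not_le.mpr (hall i))
          · have ha' : (⟨(φ i : ℕ), hall i⟩ : Fin (d * n' + 1)) = a := Fin.ext h1
            have hb' : (⟨(φ j : ℕ), hall j⟩ : Fin (d * n' + 1)) = b := Fin.ext h2
            rw [ha', hb']; exact hab
          · have ha' : (⟨(φ j : ℕ), hall j⟩ : Fin (d * n' + 1)) = a := Fin.ext h1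
            have hb' : (⟨(φ i : ℕ), hall i⟩ : Fin (d * n' + 1)) = b := Fin.ext h2
            rw [ha', hb']; exact hab.symm
    · -- blue K_{n'+2} in R'ᶜ
      right
      have hlt : ∀ i : Fin (n' + 1 + 1), i ≠ Fin.last (n' + 1) → ((ψ i : Fin _) : ℕ) < (d * n' + 1) := by
        intro i hi
        by_contra hc
        push_neg at hc
        have hil : i < Fin.last (n' + 1) := lt_of_le_of_ne (Fin.le_last i) hi
        have hlt2 := hmono hil
        have hge : (d * n' + 1) ≤ ((ψ (Fin.last (n' + 1)) : Fin _) : ℕ) := by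
          have := Fin.lt_def.mp hlt2; omega
        have htop : (⊤ : SimpleGraph (Fin (n' + 1 + 1))).Adj i (Fin.last (n' + 1)) := by
          rw [SimpleGraph.top_adj]; exact hi
        have hcompl := hadj _ _ htop
        rw [SimpleGraph.compl_adj] at hcompl
        apply hcompl.2
        rw [hR'adj]
        exact ⟨hlt2.ne, Or.inl ⟨hc, hge⟩⟩
      let ψ' : Fin (n' + 1) → Fin (d * n' + 1) := fun i => ⟨((ψ i.castSucc : Fin _) : ℕ),
        hlt i.castSucc (Fin.castSucc_lt_last i).ne⟩
      refine ⟨ψ', ?_, ?_⟩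
      · intro i j hij
        rw [Fin.lt_def]
        exact Fin.lt_def.mp (hmono (Fin.castSucc_lt_castSucc_iff.mpr hij))
      · intro i j hij
        rw [SimpleGraph.top_adj] at hij
        have hne : i.castSucc ≠ j.castSucc := fun h => hij (Fin.castSucc_injective _ h)
        have hcompl := hadj _ _ (by rw [SimpleGraph.top_adj]; exact hne)
        rw [SimpleGraph.compl_adj] at hcompl
        rw [SimpleGraph.compl_adj]
        constructor
        · intro h
          have h2 := congrArg Fin.val h
          exact hcompl.1 (Fin.ext h2)
        · intro hadj2
          apply hcompl.2
          rw [hR'adj]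
          refine ⟨fun h => hcompl.1 h, Or.inr ⟨_, _, hadj2, Or.inl ⟨rfl, rfl⟩⟩⟩
  -- Lower bound: every member of the set is ≥ d*n'+1
  have hlb : ∀ k ∈ {N : ℕ | ∀ R : SimpleGraph (Fin N), OrderedSubgraph G R ∨
      OrderedSubgraph (⊤ : SimpleGraph (Fin (n' + 1))) Rᶜ}, d * n' + 1 ≤ k := by
    intro k hk
    by_contra hc
    push_neg at hc
    have hk' : ∀ R : SimpleGraph (Fin (d * n')), OrderedSubgraph G R ∨
        OrderedSubgraph (⊤ : SimpleGraph (Fin (n' + 1))) Rᶜ :=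
      mem_up' G _ (by omega) hk
    rcases Nat.eq_zero_or_pos (d * n') with h0 | hpos
    · rcases hk' ⊥ with ⟨φ, -, -⟩ | ⟨ψ, -, -⟩
      · exact absurd (φ ⟨0, by omega⟩).isLt (by omega)
      · exact absurd (ψ ⟨0, by omega⟩).isLt (by omega)
    · have hd : 0 < d := by
        rcases Nat.eq_zero_or_pos d with h | h
        · rw [h, Nat.zero_mul] at hpos; exact absurd hpos (lt_irrefl 0)
        · exact h
      have hn'pos : 0 < n' := by
        rcases Nat.eq_zero_or_pos n' with h | h
        · rw [h, Nat.mul_zero] at hpos; exact absurd hpos (lt_irrefl 0)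
        · exact h
      set RL : SimpleGraph (Fin (d * n')) :=
        SimpleGraph.fromRel (fun x y => (x : ℕ) / d = (y : ℕ) / d) with hRLdef
      rcases hk' RL with ⟨φ, hmono, hadj⟩ | ⟨ψ, hmono, hadj⟩
      · -- red G sits in a block of size d < d+1
        have hconst : ∀ i j : Fin (d + 1), ((φ i : Fin _) : ℕ) / d = ((φ j : Fin _) : ℕ) / d := by
          intro i j
          refine image_const' hG.preconnected hadj (fun x => (x : ℕ) / d) ?_ i j
          intro x y hxy
          rw [hRLdef, SimpleGraph.fromRel_adj] at hxy
          rcases hxy.2 with h | h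
          · exact h
          · exact h.symm
        let e : Fin (d + 1) → Fin d := fun i => ⟨(φ i : ℕ) % d, Nat.mod_lt _ hd⟩
        have einj : Function.Injective e := by
          intro i j hij
          apply hmono.injective
          apply Fin.ext
          have h3 := hconst i j
          have h4 : (φ i : ℕ) % d = (φ j : ℕ) % d := congrArg Fin.val hij
          conv_lhs => rw [← Nat.div_add_mod ((φ i : Fin _) : ℕ) d]
          conv_rhs => rw [← Nat.div_add_mod ((φ j : Fin _) : ℕ) d]
          rw [h3, h4]
        have := Fintype.card_le_of_injective e einj
        rw [Fintype.card_fin, Fintype.card_fin] at this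
        omega
      · -- blue K_{n'+1} : one vertex per block, only n' blocks
        let e : Fin (n' + 1) → Fin n' := fun i =>
          ⟨((ψ i : Fin _) : ℕ) / d, by
            have := (ψ i).isLt
            exact Nat.div_lt_of_lt_mul (by omega)⟩
        have einj : Function.Injective e := by
          intro i j hij
          by_contra hne
          have hcompl := hadj i j (by rw [SimpleGraph.top_adj]; exact hne)
          rw [SimpleGraph.compl_adj] at hcompl
          apply hcompl.2
          rw [hRLdef, SimpleGraph.fromRel_adj]
          exact ⟨hcompl.1, Or.inl (congrArg Fin.val hij)⟩
        have := Fintype.card_le_of_injective e einj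
        simp at this
  -- Conclude
  have : (d + 1 - 1) * (n' + 1 - 1) + 1 = d * n' + 1 := by simp
  rw [orderedRamsey, this]
  exact le_antisymm (Nat.sInf_le hmemS) (le_csInf ⟨_, hmemS⟩ hlb)
end
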